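/- arXiv:1604.03387 — 4 statements merged into one kernel-verified Lean document; each statement's English description precedes it below -/
import Mathlib

section
/- Let ψ : ℝ^d → ℝ be a convex differentiable function, and for t ∈ [0,1] define the interpolation map T_t(z) = (1−t)·z + t·∇ψ(z). Then for all z, ẑ ∈ ℝ^d and all t ∈ [0,1], one has ‖T_t(z) − T_t(ẑ)‖ ≥ (1−t)·‖z − ẑ‖. In particular, for each t ∈ [0,1), the map T_t is injective. -/
open Set

open scoped RealInnerProductSpace

/-- Monotonicity of the gradient of a convex differentiable function. -/
lemma gradient_monotone_aux (d : ℕ) (ψ : EuclideanSpace ℝ (Fin d) → ℝ)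
    (hconv : ConvexOn ℝ Set.univ ψ) (hdiff : Differentiable ℝ ψ)
    (x y : EuclideanSpace ℝ (Fin d)) :
    0 ≤ ⟪gradient ψ y - gradient ψ x, y - x⟫ := by
  set g : ℝ → ℝ := fun s => ψ (x + s • (y - x)) with hg
  have hline : ∀ s : ℝ, HasDerivAt (fun s : ℝ => x + s • (y - x)) (y - x) s := by
    intro s
    simpa using ((hasDerivAt_id s).smul_const (y - x)).const_add x
  have hgd : ∀ s : ℝ, HasDerivAt g ⟪gradient ψ (x + s • (y - x)), y - x⟫ s := by
    intro s
    have hF : HasFDerivAt ψ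
        ((InnerProductSpace.toDual ℝ _) (gradient ψ (x + s • (y - x)))) (x + s • (y - x)) := by
      have := (hdiff (x + s • (y - x))).hasGradientAt
      rwa [hasGradientAt_iff_hasFDerivAt] at this
    have := hF.comp_hasDerivAt s (hline s)
    exact this
  have hgconv : ConvexOn ℝ Set.univ g := by
    have : ConvexOn ℝ ((fun s : ℝ => x + s • (y - x)) ⁻¹' Set.univ)
        (ψ ∘ (AffineMap.lineMap x y : ℝ →ᵃ[ℝ] _)) := by
      have := hconv.comp_affineMap (AffineMap.lineMap x y : ℝ →ᵃ[ℝ] _)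
      simpa using this
    have heq : (ψ ∘ (AffineMap.lineMap x y : ℝ →ᵃ[ℝ] _)) = g := by
      funext s
      simp only [g, Function.comp_apply, AffineMap.lineMap_apply, vsub_eq_sub, vadd_eq_add]
      rw [add_comm]
    rw [heq] at this
    simpa using this
  have h0 : ⟪gradient ψ x, y - x⟫ ≤ g 1 - g 0 := by
    have := hgconv.le_slope_of_hasDerivAt (mem_univ (0:ℝ)) (mem_univ (1:ℝ))
      (by norm_num) (by simpa using hgd 0)
    simpa [slope_def_field, g] using this
  have h1 : g 1 - g 0 ≤ ⟪gradient ψ y, y - x⟫ := by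
    have := hgconv.slope_le_of_hasDerivAt (mem_univ (0:ℝ)) (mem_univ (1:ℝ))
      (by norm_num) (by simpa using hgd 1)
    simpa [slope_def_field, g] using this
  have := h0.trans h1
  rw [inner_sub_left]
  linarith

/-- For a convex differentiable `ψ : ℝ^d → ℝ`, the interpolation maps
`T_t(z) = (1−t)z + t∇ψ(z)` satisfy `‖T_t z − T_t z'‖ ≥ (1−t)‖z − z'‖`, and are injective
for `t ∈ [0,1)`. -/
theorem interpolant_expansion_and_injectivity
    (d : ℕ) (ψ : EuclideanSpace ℝ (Fin d) → ℝ)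
    (hconv : ConvexOn ℝ Set.univ ψ) (hdiff : Differentiable ℝ ψ) :
    (∀ t ∈ Icc (0:ℝ) 1, ∀ z z' : EuclideanSpace ℝ (Fin d),
      (1 - t) * ‖z - z'‖ ≤
        ‖((1 - t) • z + t • gradient ψ z) - ((1 - t) • z' + t • gradient ψ z')‖) ∧
    (∀ t ∈ Ico (0:ℝ) 1,
      Function.Injective (fun z : EuclideanSpace ℝ (Fin d) =>
        (1 - t) • z + t • gradient ψ z)) := by
  have key : ∀ t ∈ Icc (0:ℝ) 1, ∀ z z' : EuclideanSpace ℝ (Fin d),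
      (1 - t) * ‖z - z'‖ ≤
        ‖((1 - t) • z + t • gradient ψ z) - ((1 - t) • z' + t • gradient ψ z')‖ := by
    intro t ht z z'
    rcases eq_or_ne z z' with rfl | hne
    · simp
    have hnorm : 0 < ‖z - z'‖ := by
      rw [norm_pos_iff, sub_ne_zero]; exact hne
    set T := ((1 - t) • z + t • gradient ψ z) - ((1 - t) • z' + t • gradient ψ z') with hT
    have hTeq : T = (1 - t) • (z - z') + t • (gradient ψ z - gradient ψ z') := by
      rw [hT]; module
    have hinner : (1 - t) * ‖z - z'‖ ^ 2 ≤ ⟪T, z - z'⟫ := by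
      rw [hTeq, inner_add_left, real_inner_smul_left, real_inner_smul_left,
        real_inner_self_eq_norm_sq]
      have hmono := gradient_monotone_aux d ψ hconv hdiff z' z
      nlinarith [ht.1, ht.2]
    have hCS : ⟪T, z - z'⟫ ≤ ‖T‖ * ‖z - z'‖ := real_inner_le_norm T (z - z')
    have : (1 - t) * ‖z - z'‖ ^ 2 ≤ ‖T‖ * ‖z - z'‖ := hinner.trans hCS
    have := mul_le_mul_iff_of_pos_right hnorm |>.mp (by nlinarith)
    nlinarith
  refine ⟨key, ?_⟩
  intro t ht z z' h
  have h1 := key t ⟨ht.1, le_of_lt ht.2⟩ z z'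
  simp only at h
  rw [h, sub_self, norm_zero] at h1
  have ht1 : 0 < 1 - t := by linarith [ht.2]
  have hz : ‖z - z'‖ = 0 := by nlinarith [norm_nonneg (z - z')]
  rwa [norm_eq_zero, sub_eq_zero] at hz
end

section
/- Let d ≥ 1, r > 0, and let a : [0,1] → (0,∞)^d be a C² curve with ∏_{j=1}^d a_j(t) = r^d for all t and such that the product a_j(t)·a_j''(t) is independent of j (the geodesic equations on the surface {a ∈ (0,∞)^d : ∏ a_j = r^d}). Define β̇(t) = ½ (Σ_j a_j'(t)²/a_j(t)²) / (Σ_j a_j(t)^{−2}), β(t) = ∫_0^t β̇(s) ds, φ(x,t) = ½ Σ_j a_j'(t) x_j² / a_j(t) − β(t), p(x,t) = β̇(t) (1 − Σ_j x_j²/a_j(t)²), and the open ellipsoid E_{a(t)} = {x ∈ ℝ^d : Σ_j x_j²/a_j(t)² < 1}. Then: (i) a_j(t)·a_j''(t) = 2β̇(t) for all j and t; (ii) Δ_x φ(·,t) = 0 on ℝ^d for every t; (iii) ∂_t φ(x,t) + ½ |∇_x φ(x,t)|² + p(x,t) = 0 for all (x,t); (iv) p(x,t) = 0 for every x with Σ_j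 x_j²/a_j(t)² = 1, and p(x,t) ≥ 0 for x ∈ E_{a(t)}; (v) the flow X(z,t) = (a_1(t) z_1/a_1(0), …, a_d(t) z_d/a_d(0)) satisfies X(z,0) = z, ∂_t X(z,t) = ∇_x φ(X(z,t), t), and X(E_{a(0)}, t) = E_{a(t)} for every t. In particular, (E_{a(·)}, X, φ, p) constitutes a smooth Euler droplet solution with ellipsoidal fluid domains. -/
open Set

private lemma eqZeroOnIcc {g : ℝ → ℝ} (hg : ContinuousOn g (Icc (0:ℝ) 1))
    (h : ∀ t ∈ Ioo (0:ℝ) 1, g t = 0) : ∀ t ∈ Icc (0:ℝ) 1, g t = 0 := by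
  intro t ht
  have hcl : t ∈ closure (Ioo (0:ℝ) 1) := by
    rw [closure_Ioo (by norm_num : (0:ℝ) ≠ 1)]; exact ht
  have hneb : (nhdsWithin t (Ioo (0:ℝ) 1)).NeBot := mem_closure_iff_nhdsWithin_neBot.mp hcl
  have h1 : Filter.Tendsto g (nhdsWithin t (Ioo (0:ℝ) 1)) (nhds (g t)) :=
    ((hg t ht).mono Ioo_subset_Icc_self).tendsto
  have h2 : Filter.Tendsto g (nhdsWithin t (Ioo (0:ℝ) 1)) (nhds 0) := by
    apply Filter.Tendsto.congr' _ tendsto_const_nhds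
    filter_upwards [self_mem_nhdsWithin] with s hs using (h s hs).symm
  exact tendsto_nhds_unique h1 h2

/-- **Proposition 3.3.** Ellipsoidal Euler droplets: if
`a : [0,1] → (0,∞)^d` is a `C²` geodesic on the constant-volume surface
`{∏ⱼ aⱼ = r^d}` (i.e. `aⱼ·aⱼ''` independent of `j`), then with
`β̇(t) = ½(∑ⱼ aⱼ'²/aⱼ²)/(∑ⱼ aⱼ⁻²)`, `β(t) = ∫₀ᵗ β̇`,
`φ(x,t) = ½∑ⱼ aⱼ'xⱼ²/aⱼ − β(t)`, `p(x,t) = β̇(t)(1 − ∑ⱼ xⱼ²/aⱼ²)`: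
(i) `aⱼ aⱼ'' = 2β̇`; (ii) `φ(·,t)` is harmonic; (iii) the Bernoulli equation
`∂ₜφ + ½|∇ₓφ|² + p = 0` holds; (iv) `p = 0` on the boundary ellipsoid and `p ≥ 0`
inside; and (v) the dilational flow `X(z,t)ⱼ = aⱼ(t)zⱼ/aⱼ(0)` satisfies `X(·,0) = id`,
`∂ₜX = ∇ₓφ(X,t)`, and carries the ellipsoid `E_{a(0)}` onto `E_{a(t)}`. -/
theorem ellipsoidal_euler_droplet
    (d : ℕ) (hd : 1 ≤ d) (r : ℝ) (hr : 0 < r)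
    (a : ℝ → Fin d → ℝ) (ha : ContDiff ℝ 2 a)
    (hpos : ∀ t ∈ Icc (0:ℝ) 1, ∀ j, 0 < a t j)
    (hvol : ∀ t ∈ Icc (0:ℝ) 1, ∏ j, a t j = r ^ d)
    (hgeo : ∀ t ∈ Icc (0:ℝ) 1, ∀ i j,
      a t i * deriv (deriv fun s => a s i) t = a t j * deriv (deriv fun s => a s j) t)
    (betadot : ℝ → ℝ)
    (hbetadot : ∀ t, betadot t =
      (1/2) * (∑ j, (deriv (fun s => a s j) t) ^ 2 / (a t j) ^ 2) /
        (∑ j, ((a t j) ^ 2)⁻¹))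
    (β : ℝ → ℝ) (hβ : ∀ t, β t = ∫ s in (0:ℝ)..t, betadot s)
    (φ : EuclideanSpace ℝ (Fin d) → ℝ → ℝ)
    (hφ : ∀ x t, φ x t =
      (1/2) * (∑ j, deriv (fun s => a s j) t * (x j) ^ 2 / a t j) - β t)
    (p : EuclideanSpace ℝ (Fin d) → ℝ → ℝ)
    (hp : ∀ x t, p x t = betadot t * (1 - ∑ j, (x j) ^ 2 / (a t j) ^ 2))
    (X : EuclideanSpace ℝ (Fin d) → ℝ → EuclideanSpace ℝ (Fin d))
    (hX : ∀ z t j, X z t j = a t j * z j / a 0 j) :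
    -- (i) common value of aⱼ·aⱼ''
    (∀ t ∈ Icc (0:ℝ) 1, ∀ j,
      a t j * deriv (deriv fun s => a s j) t = 2 * betadot t) ∧
    -- (ii) φ(·,t) is harmonic on all of ℝ^d
    (∀ t ∈ Icc (0:ℝ) 1, ∀ x : EuclideanSpace ℝ (Fin d),
      (∑ j, fderiv ℝ
          (fun y => fderiv ℝ (fun y' => φ y' t) y (EuclideanSpace.single j (1:ℝ))) x
          (EuclideanSpace.single j (1:ℝ))) = 0) ∧
    -- (iii) the Bernoulli equation
    (∀ t ∈ Icc (0:ℝ) 1, ∀ x : EuclideanSpace ℝ (Fin d),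
      deriv (fun s => φ x s) t + (1/2) * ‖gradient (fun y => φ y t) x‖ ^ 2 + p x t
        = 0) ∧
    -- (iv) the pressure vanishes on the boundary ellipsoid and is nonnegative inside
    (∀ t ∈ Icc (0:ℝ) 1, ∀ x : EuclideanSpace ℝ (Fin d),
      ((∑ j, (x j) ^ 2 / (a t j) ^ 2) = 1 → p x t = 0) ∧
      ((∑ j, (x j) ^ 2 / (a t j) ^ 2) < 1 → 0 ≤ p x t)) ∧
    -- (v) the dilational flow solves the ODE and deforms ellipsoids to ellipsoids
    (∀ z, X z 0 = z) ∧
    (∀ z : EuclideanSpace ℝ (Fin d), ∀ t ∈ Icc (0:ℝ) 1,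
      HasDerivAt (fun s => X z s) (gradient (fun y => φ y t) (X z t)) t) ∧
    (∀ t ∈ Icc (0:ℝ) 1,
      (fun z => X z t) ''
          {x : EuclideanSpace ℝ (Fin d) | ∑ j, (x j / a 0 j) ^ 2 < 1} =
        {x : EuclideanSpace ℝ (Fin d) | ∑ j, (x j / a t j) ^ 2 < 1}) := by
  -- regularity of components
  have hreg : ∀ j : Fin d, Differentiable ℝ (fun t => a t j) ∧
      Differentiable ℝ (deriv (fun t => a t j)) ∧
      Continuous (deriv (deriv (fun t => a t j))) := by
    intro j
    have hf : ContDiff ℝ 2 (fun t => a t j) := contDiff_pi.mp ha j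
    have h2 : ContDiff ℝ ((1:ℕ) + 1) (fun t => a t j) := by exact_mod_cast hf
    rw [contDiff_succ_iff_deriv] at h2
    obtain ⟨h1, -, h3⟩ := h2
    have h3' : ContDiff ℝ (1 : WithTop ℕ∞) (deriv (fun t => a t j)) := by exact_mod_cast h3
    rw [contDiff_one_iff_deriv] at h3'
    exact ⟨h1, h3'.1, h3'.2⟩
  have hdiff : ∀ j, Differentiable ℝ (fun t => a t j) := fun j => (hreg j).1
  have hdiff' : ∀ j, Differentiable ℝ (deriv (fun t => a t j)) := fun j => (hreg j).2.1
  have hcont'' : ∀ j, Continuous (deriv (deriv (fun t => a t j))) := fun j => (hreg j).2.2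
  have hcont' : ∀ j, Continuous (deriv (fun t => a t j)) := fun j => (hdiff' j).continuous
  have hconta : ∀ j, Continuous (fun t => a t j) := fun j => (hdiff j).continuous
  -- the open set where all aⱼ are positive
  set U : Set ℝ := {t | ∀ j, 0 < a t j} with hUdef
  have hUopen : IsOpen U := by
    have hU2 : U = ⋂ j, {t | 0 < a t j} := by ext t; simp [hUdef, Set.mem_iInter]
    rw [hU2]
    exact isOpen_iInter_of_finite fun j => isOpen_lt continuous_const (hconta j)
  have hIccU : Icc (0:ℝ) 1 ⊆ U := fun t ht j => hpos t ht j
  have hane : ∀ t ∈ U, ∀ j, a t j ≠ 0 := fun t ht j => ne_of_gt (ht j)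
  have hne : Nonempty (Fin d) := ⟨⟨0, hd⟩⟩
  have hdenpos : ∀ t ∈ U, 0 < ∑ j, ((a t j)^2)⁻¹ := by
    intro t ht
    exact Finset.sum_pos (fun j _ => inv_pos.mpr (pow_pos (ht j) 2)) Finset.univ_nonempty
  -- first derivative of the log-volume vanishes on [0,1]
  have hA : ∀ t ∈ Icc (0:ℝ) 1, ∑ j, deriv (fun s => a s j) t / a t j = 0 := by
    have hgU : ∀ t ∈ U, HasDerivAt (fun s => ∑ j, Real.log (a s j))
        (∑ j, deriv (fun s => a s j) t / a t j) t := by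
      intro t ht
      exact HasDerivAt.fun_sum fun j _ => ((hdiff j t).hasDerivAt).log (hane t ht j)
    have hGconst : ∀ t ∈ Icc (0:ℝ) 1, (∑ j, Real.log (a t j)) = Real.log (r ^ d) := by
      intro t ht
      rw [← hvol t ht]
      exact (Real.log_prod fun j _ => ne_of_gt (hpos t ht j)).symm
    have hIoo : ∀ t ∈ Ioo (0:ℝ) 1, ∑ j, deriv (fun s => a s j) t / a t j = 0 := by
      intro t ht
      have h2 : HasDerivAt (fun s => ∑ j, Real.log (a s j)) 0 t := by
        have hev : (fun s => ∑ j, Real.log (a s j)) =ᶠ[nhds t]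
            fun _ => Real.log (r ^ d) := by
          filter_upwards [Ioo_mem_nhds ht.1 ht.2] with s hs
          exact hGconst s (Ioo_subset_Icc_self hs)
        exact (hasDerivAt_const t _).congr_of_eventuallyEq hev
      exact (hgU t (hIccU (Ioo_subset_Icc_self ht))).unique h2
    have hgc : ContinuousOn (fun t => ∑ j, deriv (fun s => a s j) t / a t j)
        (Icc (0:ℝ) 1) := by
      apply ContinuousOn.mono _ hIccU
      exact continuousOn_finset_sum _ fun j _ =>
        (hcont' j).continuousOn.div (hconta j).continuousOn fun t ht => hane t ht j
    exact eqZeroOnIcc hgc hIoo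
  -- second derivative of the log-volume vanishes on [0,1]
  have hB : ∀ t ∈ Icc (0:ℝ) 1,
      ∑ j, (deriv (deriv fun s => a s j) t * a t j -
        deriv (fun s => a s j) t * deriv (fun s => a s j) t) / (a t j)^2 = 0 := by
    have hgU : ∀ t ∈ U, HasDerivAt (fun u => ∑ j, deriv (fun s => a s j) u / a u j)
        (∑ j, (deriv (deriv fun s => a s j) t * a t j -
          deriv (fun s => a s j) t * deriv (fun s => a s j) t) / (a t j)^2) t := by
      intro t ht
      exact HasDerivAt.fun_sum fun j _ =>
        ((hdiff' j t).hasDerivAt).div ((hdiff j t).hasDerivAt) (hane t ht j)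
    have hIoo : ∀ t ∈ Ioo (0:ℝ) 1,
        ∑ j, (deriv (deriv fun s => a s j) t * a t j -
          deriv (fun s => a s j) t * deriv (fun s => a s j) t) / (a t j)^2 = 0 := by
      intro t ht
      have h2 : HasDerivAt (fun u => ∑ j, deriv (fun s => a s j) u / a u j) 0 t := by
        have hev : (fun u => ∑ j, deriv (fun s => a s j) u / a u j) =ᶠ[nhds t]
            fun _ => 0 := by
          filter_upwards [Ioo_mem_nhds ht.1 ht.2] with s hs
          exact hA s (Ioo_subset_Icc_self hs)
        exact (hasDerivAt_const t 0).congr_of_eventuallyEq hev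
      exact (hgU t (hIccU (Ioo_subset_Icc_self ht))).unique h2
    have hgc : ContinuousOn (fun t => ∑ j, (deriv (deriv fun s => a s j) t * a t j -
        deriv (fun s => a s j) t * deriv (fun s => a s j) t) / (a t j)^2)
        (Icc (0:ℝ) 1) := by
      apply ContinuousOn.mono _ hIccU
      apply continuousOn_finset_sum _ fun j _ => ?_
      exact (((hcont'' j).continuousOn.mul (hconta j).continuousOn).sub
          ((hcont' j).continuousOn.mul (hcont' j).continuousOn)).div
        ((hconta j).continuousOn.pow 2) fun t ht => pow_ne_zero 2 (hane t ht j)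
    exact eqZeroOnIcc hgc hIoo
  -- (i)
  have hK : ∀ t ∈ Icc (0:ℝ) 1, ∀ j,
      a t j * deriv (deriv fun s => a s j) t = 2 * betadot t := by
    intro t ht j
    have hsp : 0 < ∑ i, ((a t i)^2)⁻¹ := hdenpos t (hIccU ht)
    have hBt := hB t ht
    have hterm : ∀ i : Fin d, (deriv (deriv fun s => a s i) t * a t i -
        deriv (fun s => a s i) t * deriv (fun s => a s i) t) / (a t i)^2
        = (a t j * deriv (deriv fun s => a s j) t) * ((a t i)^2)⁻¹ -
          (deriv (fun s => a s i) t)^2 / (a t i)^2 := by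
      intro i
      have hgi := hgeo t ht i j
      have hai : a t i ≠ 0 := ne_of_gt (hpos t ht i)
      field_simp
      linear_combination hgi
    rw [Finset.sum_congr rfl (fun i _ => hterm i), Finset.sum_sub_distrib,
      ← Finset.mul_sum] at hBt
    have hsum : ∑ i, (deriv (fun s => a s i) t)^2/(a t i)^2
        = (a t j * deriv (deriv fun s => a s j) t) * ∑ i, ((a t i)^2)⁻¹ := by
      linarith
    rw [hbetadot t, hsum]
    have hS' : (∑ i : Fin d, ((a t i)^2)⁻¹) ≠ 0 := ne_of_gt hsp
    generalize hSd : (∑ i : Fin d, ((a t i)^2)⁻¹) = S at hS' ⊢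
    field_simp
  -- continuity of betadot on U and the FTC for β
  have hbcont : ContinuousOn betadot U := by
    have hbeq : betadot = fun t =>
        (1/2) * (∑ j, (deriv (fun s => a s j) t) ^ 2 / (a t j) ^ 2) /
          (∑ j, ((a t j) ^ 2)⁻¹) := funext hbetadot
    rw [hbeq]
    apply ContinuousOn.div
    · exact continuousOn_const.mul (continuousOn_finset_sum _ fun j _ =>
        ((hcont' j).continuousOn.pow 2).div ((hconta j).continuousOn.pow 2)
          fun t ht => pow_ne_zero 2 (hane t ht j))
    · exact continuousOn_finset_sum _ fun j _ =>
        ((hconta j).continuousOn.pow 2).inv₀ fun t ht => pow_ne_zero 2 (hane t ht j)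
    · exact fun t ht => (hdenpos t ht).ne'
  have hFTC : ∀ t ∈ Icc (0:ℝ) 1, HasDerivAt β (betadot t) t := by
    intro t ht
    have hsub : uIcc (0:ℝ) t ⊆ U := by
      rw [uIcc_of_le ht.1]
      exact fun s hs => hIccU ⟨hs.1, le_trans hs.2 ht.2⟩
    have h1 : IntervalIntegrable betadot MeasureTheory.volume 0 t :=
      (hbcont.mono hsub).intervalIntegrable
    have h2 := ContinuousOn.stronglyMeasurableAtFilter (μ := MeasureTheory.volume) hUopen hbcont t (hIccU ht)
    have h3 : ContinuousAt betadot t := hbcont.continuousAt (hUopen.mem_nhds (hIccU ht))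
    have h4 := intervalIntegral.integral_hasDerivAt_right h1 h2 h3
    have hfe : β = fun u => ∫ s in (0:ℝ)..u, betadot s := funext hβ
    rw [hfe]
    exact h4
  -- the spatial gradient of φ
  have hgrad : ∀ (t : ℝ) (x : EuclideanSpace ℝ (Fin d)),
      HasGradientAt (fun y => φ y t)
        ((WithLp.toLp 2 (fun j => deriv (fun s => a s j) t / a t j * x j) :
          EuclideanSpace ℝ (Fin d))) x := by
    intro t x
    have hfun : (fun y : EuclideanSpace ℝ (Fin d) => φ y t)
        = fun y => (∑ j, (deriv (fun s => a s j) t / a t j / 2) * (y j)^2) - β t := by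
      funext y
      rw [hφ, Finset.mul_sum]
      congr 1
      exact Finset.sum_congr rfl fun j _ => by ring
    rw [hfun, hasGradientAt_iff_hasFDerivAt]
    have hF : HasFDerivAt
        (fun y : EuclideanSpace ℝ (Fin d) =>
          (∑ j, (deriv (fun s => a s j) t / a t j / 2) * (y j)^2) - β t)
        (∑ j, (deriv (fun s => a s j) t / a t j * x j) •
          (EuclideanSpace.proj j : EuclideanSpace ℝ (Fin d) →L[ℝ] ℝ)) x := by
      apply HasFDerivAt.sub_const
      apply HasFDerivAt.fun_sum
      intro j _
      have hproj : HasFDerivAt (fun y : EuclideanSpace ℝ (Fin d) => y j)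
          (EuclideanSpace.proj j : EuclideanSpace ℝ (Fin d) →L[ℝ] ℝ) x :=
        (EuclideanSpace.proj (𝕜 := ℝ) j).hasFDerivAt
      have h2 := (hproj.mul hproj).const_mul (deriv (fun s => a s j) t / a t j / 2)
      refine (h2.congr_fderiv ?_).congr_of_eventuallyEq (Filter.Eventually.of_forall fun y => ?_)
      · ext v
        simp only [ContinuousLinearMap.smul_apply, ContinuousLinearMap.add_apply, smul_eq_mul]
        ring
      · simp [sq]
    refine hF.congr_fderiv (ContinuousLinearMap.ext fun v => ?_)
    rw [InnerProductSpace.toDual_apply_apply]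
    simp [PiLp.inner_apply, RCLike.inner_apply, ContinuousLinearMap.sum_apply]
    exact Finset.sum_congr rfl fun _ _ => by ring
  have hgradval : ∀ (t : ℝ) (x : EuclideanSpace ℝ (Fin d)),
      gradient (fun y => φ y t) x
        = (WithLp.toLp 2 (fun j => deriv (fun s => a s j) t / a t j * x j) :
          EuclideanSpace ℝ (Fin d)) := fun t x => (hgrad t x).gradient
  have hnorm : ∀ w : EuclideanSpace ℝ (Fin d), ‖w‖^2 = ∑ j, (w j)^2 := by
    intro w
    rw [EuclideanSpace.norm_eq, Real.sq_sqrt (Finset.sum_nonneg fun j _ => sq_nonneg _)]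
    simp [sq_abs]
  have ha0 : ∀ j, a 0 j ≠ 0 := fun j =>
    ne_of_gt (hpos 0 (Set.left_mem_Icc.mpr zero_le_one) j)
  refine ⟨hK, ?_, ?_, ?_, ?_, ?_, ?_⟩
  -- (ii) harmonicity
  · intro t ht x
    have hin : ∀ (j : Fin d) (y : EuclideanSpace ℝ (Fin d)),
        fderiv ℝ (fun y' => φ y' t) y (EuclideanSpace.single j (1:ℝ))
          = deriv (fun s => a s j) t / a t j * y j := by
      intro j y
      rw [(hgrad t y).hasFDerivAt.fderiv, InnerProductSpace.toDual_apply_apply,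
        EuclideanSpace.inner_single_right]
      simp
    have hout : ∀ j : Fin d, fderiv ℝ
        (fun y => fderiv ℝ (fun y' => φ y' t) y (EuclideanSpace.single j (1:ℝ))) x
        (EuclideanSpace.single j (1:ℝ)) = deriv (fun s => a s j) t / a t j := by
      intro j
      have heq : (fun y : EuclideanSpace ℝ (Fin d) =>
          fderiv ℝ (fun y' => φ y' t) y (EuclideanSpace.single j (1:ℝ)))
          = fun y => deriv (fun s => a s j) t / a t j * y j := funext fun y => hin j y
      rw [heq]
      have h : HasFDerivAt
          (fun y : EuclideanSpace ℝ (Fin d) => deriv (fun s => a s j) t / a t j * y j)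
          ((deriv (fun s => a s j) t / a t j) •
            (EuclideanSpace.proj j : EuclideanSpace ℝ (Fin d) →L[ℝ] ℝ)) x :=
        (EuclideanSpace.proj (𝕜 := ℝ) j).hasFDerivAt.const_mul _
      rw [h.fderiv]
      simp [EuclideanSpace.single_apply]
    calc (∑ j, fderiv ℝ
          (fun y => fderiv ℝ (fun y' => φ y' t) y (EuclideanSpace.single j (1:ℝ))) x
          (EuclideanSpace.single j (1:ℝ)))
        = ∑ j, deriv (fun s => a s j) t / a t j :=
          Finset.sum_congr rfl fun j _ => hout j
      _ = 0 := hA t ht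
  -- (iii) Bernoulli
  · intro t ht x
    have haj : ∀ j, a t j ≠ 0 := fun j => ne_of_gt (hpos t ht j)
    have htder : HasDerivAt (fun s => φ x s)
        ((1/2) * (∑ j, (deriv (deriv fun u => a u j) t * (x j)^2 * a t j -
          deriv (fun u => a u j) t * (x j)^2 * deriv (fun u => a u j) t) / (a t j)^2)
          - betadot t) t := by
      have hfun : (fun s => φ x s) = fun s =>
          (1/2) * (∑ j, deriv (fun u => a u j) s * (x j)^2 / a s j) - β s :=
        funext fun s => hφ x s
      rw [hfun]
      apply HasDerivAt.sub _ (hFTC t ht)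
      apply HasDerivAt.const_mul
      apply HasDerivAt.fun_sum
      intro j _
      exact ((hdiff' j t).hasDerivAt.mul_const ((x j)^2)).div
        ((hdiff j t).hasDerivAt) (haj j)
    have hnormval : ‖gradient (fun y => φ y t) x‖^2
        = ∑ j, (deriv (fun u => a u j) t / a t j * x j)^2 := by
      rw [hgradval t x, hnorm]
    rw [htder.deriv, hnormval, hp]
    have hsum : ∑ j, ((1/2) * ((deriv (deriv fun u => a u j) t * (x j)^2 * a t j -
        deriv (fun u => a u j) t * (x j)^2 * deriv (fun u => a u j) t) / (a t j)^2)
        + (1/2) * (deriv (fun u => a u j) t / a t j * x j)^2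
        - betadot t * ((x j)^2 / (a t j)^2)) = 0 := by
      apply Finset.sum_eq_zero
      intro j _
      have hKj := hK t ht j
      have hajj := haj j
      field_simp
      linear_combination (x j)^2 * hKj
    rw [Finset.sum_sub_distrib, Finset.sum_add_distrib, ← Finset.mul_sum,
      ← Finset.mul_sum, ← Finset.mul_sum] at hsum
    linear_combination hsum
  -- (iv) pressure
  · intro t ht x
    constructor
    · intro h
      rw [hp, h]
      ring
    · intro h
      rw [hp]
      have hb0 : 0 ≤ betadot t := by
        rw [hbetadot]
        apply div_nonneg
        · exact mul_nonneg (by norm_num)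
            (Finset.sum_nonneg fun j _ => div_nonneg (sq_nonneg _) (sq_nonneg _))
        · exact Finset.sum_nonneg fun j _ => inv_nonneg.mpr (sq_nonneg _)
      exact mul_nonneg hb0 (by linarith)
  -- (v) initial condition
  · intro z
    ext j
    rw [hX, mul_comm, mul_div_assoc, div_self (ha0 j), mul_one]
  -- (v) the ODE
  · intro z t ht
    have haj : ∀ j, a t j ≠ 0 := fun j => ne_of_gt (hpos t ht j)
    have hgval : gradient (fun y => φ y t) (X z t)
        = (WithLp.toLp 2 (fun j => deriv (fun s => a s j) t * z j / a 0 j) :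
          EuclideanSpace ℝ (Fin d)) := by
      rw [hgradval]
      ext j
      simp only [WithLp.ofLp_toLp]
      rw [hX, div_mul_div_comm, mul_left_comm, mul_div_mul_left _ _ (haj j)]
    rw [hgval]
    have hg : HasDerivAt (fun s => fun j => a s j * z j / a 0 j)
        (fun j => deriv (fun s => a s j) t * z j / a 0 j) t := by
      apply hasDerivAt_pi.mpr
      intro j
      have h1 : HasDerivAt (fun s => a s j * (z j / a 0 j))
          (deriv (fun s => a s j) t * (z j / a 0 j)) t :=
        (hdiff j t).hasDerivAt.mul_const _
      refine (h1.congr_deriv ?_).congr_of_eventuallyEq (Filter.Eventually.of_forall fun s => ?_)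
      · rw [mul_div_assoc]
      · exact mul_div_assoc _ _ _
    have h := ((PiLp.continuousLinearEquiv 2 ℝ
      (fun _ : Fin d => ℝ)).symm.toContinuousLinearMap.hasFDerivAt.comp_hasDerivAt t hg)
    refine h.congr_of_eventuallyEq (Filter.Eventually.of_forall fun s => ?_)
    ext j
    rw [hX]
    rfl
  -- (v) images of ellipsoids
  · intro t ht
    have haj : ∀ j, a t j ≠ 0 := fun j => ne_of_gt (hpos t ht j)
    ext x
    simp only [Set.mem_image, Set.mem_setOf_eq]
    constructor
    · rintro ⟨z, hz, rfl⟩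
      have hco : ∀ j, X z t j / a t j = z j / a 0 j := by
        intro j
        rw [hX, div_div, mul_comm (a 0 j) (a t j), mul_div_mul_left _ _ (haj j)]
      calc ∑ j, (X z t j / a t j)^2 = ∑ j, (z j / a 0 j)^2 :=
            Finset.sum_congr rfl fun j _ => by rw [hco j]
        _ < 1 := hz
    · intro hx
      refine ⟨(WithLp.toLp 2 (fun j => a 0 j * x j / a t j) : EuclideanSpace ℝ (Fin d)), ?_, ?_⟩
      · have hco : ∀ j : Fin d, (a 0 j * x j / a t j) / a 0 j = x j / a t j := by
          intro j
          rw [div_div, mul_comm (a t j) (a 0 j), mul_div_mul_left _ _ (ha0 j)]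
        calc (∑ j, ((WithLp.toLp 2 (fun j => a 0 j * x j / a t j) :
              EuclideanSpace ℝ (Fin d)) j / a 0 j)^2)
            = ∑ j, (x j / a t j)^2 := Finset.sum_congr rfl fun j _ => by
              show ((a 0 j * x j / a t j) / a 0 j)^2 = _
              rw [hco j]
          _ < 1 := hx
      · ext j
        rw [hX]
        show a t j * (a 0 j * x j / a t j) / a 0 j = x j
        rw [mul_comm (a t j) (a 0 j * x j / a t j), div_mul_cancel₀ _ (haj j),
          mul_comm, mul_div_assoc, div_self (ha0 j), mul_one]
end

section
/- Let d ≥ 1, r > 0, and let a : [0,1] → (0,∞)^d be a C² curve with ∏_{j=1}^d a_j(t) = r^d for all t and with a_j(t)·a_j''(t) independent of j. Then each component a_j is a convex function on [0,1]. Consequently, setting A_j(t) = (1−t)·a_j(0) + t·a_j(1), one has a_j(t) ≤ A_j(t) for all t ∈ [0,1] and all j, and hence the ellipsoids remain nested: E_{a(t)} ⊆ E_{A(t)} for all t ∈ [0,1], where E_b = {x ∈ ℝ^d : Σ_j (x_j/b_j)² < 1} for b ∈ (0,∞)^d. -/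
open Set

lemma aux_second_deriv_nonneg
    (d : ℕ) (hd : 1 ≤ d) (r : ℝ) (hr : 0 < r)
    (a : ℝ → Fin d → ℝ) (ha : ContDiff ℝ 2 a)
    (hpos : ∀ t ∈ Icc (0:ℝ) 1, ∀ j, 0 < a t j)
    (hvol : ∀ t ∈ Icc (0:ℝ) 1, ∏ j, a t j = r ^ d)
    (hgeo : ∀ t ∈ Icc (0:ℝ) 1, ∀ i j,
      a t i * deriv (deriv fun s => a s i) t = a t j * deriv (deriv fun s => a s j) t) :
    ∀ t ∈ Ioo (0:ℝ) 1, ∀ j, 0 ≤ deriv (deriv fun s => a s j) t := by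
  intro t ht j
  have hIoo : Ioo (0:ℝ) 1 ⊆ Icc 0 1 := Ioo_subset_Icc_self
  have hpos' : ∀ s ∈ Ioo (0:ℝ) 1, ∀ i, 0 < a s i := fun s hs => hpos s (hIoo hs)
  have hci : ∀ i, ContDiff ℝ 2 (fun s => a s i) := fun i => contDiff_pi.mp ha i
  have hdiff : ∀ i, Differentiable ℝ (fun s => a s i) := fun i =>
    (hci i).differentiable (by norm_num)
  have hdiff' : ∀ i, Differentiable ℝ (deriv fun s => a s i) := by
    intro i
    have h2 : ContDiff ℝ ((1:WithTop ℕ∞) + 1) (fun s => a s i) := by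
      norm_num
      exact hci i
    exact (contDiff_succ_iff_deriv.mp h2).2.2.differentiable one_ne_zero
  -- Step A : sum of logarithmic derivatives vanishes on Ioo
  have stepA : ∀ s ∈ Ioo (0:ℝ) 1, (∑ i, deriv (fun u => a u i) s / a s i) = 0 := by
    intro s hs
    have hL : HasDerivAt (fun u => ∑ i, Real.log (a u i))
        (∑ i, deriv (fun u => a u i) s / a s i) s := by
      apply HasDerivAt.fun_sum
      intro i _
      exact ((hdiff i s).hasDerivAt).log (ne_of_gt (hpos' s hs i))
    have hconst : (fun u => ∑ i, Real.log (a u i)) =ᶠ[nhds s]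
        (fun _ => Real.log (r ^ d)) := by
      filter_upwards [isOpen_Ioo.mem_nhds hs] with u hu
      rw [← Real.log_prod (fun i _ => ne_of_gt (hpos' u hu i)), hvol u (hIoo hu)]
    have h1 : deriv (fun u => ∑ i, Real.log (a u i)) s = 0 := by
      rw [hconst.deriv_eq, deriv_const]
    rw [← hL.deriv, h1]
  -- Step B : derivative of that sum vanishes at t, with explicit formula
  have hS : HasDerivAt (fun s => ∑ i, deriv (fun u => a u i) s / a s i)
      (∑ i, (deriv (deriv fun u => a u i) t * a t i
        - deriv (fun u => a u i) t * deriv (fun u => a u i) t) / (a t i) ^ 2) t := by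
    apply HasDerivAt.fun_sum
    intro i _
    exact ((hdiff' i t).hasDerivAt).div ((hdiff i t).hasDerivAt)
      (ne_of_gt (hpos' t ht i))
  have hSconst : (fun s => ∑ i, deriv (fun u => a u i) s / a s i) =ᶠ[nhds t]
      (fun _ => (0:ℝ)) := by
    filter_upwards [isOpen_Ioo.mem_nhds ht] with u hu
    exact stepA u hu
  have hB : (∑ i, (deriv (deriv fun u => a u i) t * a t i
        - deriv (fun u => a u i) t * deriv (fun u => a u i) t) / (a t i) ^ 2) = 0 := by
    rw [← hS.deriv, hSconst.deriv_eq, deriv_const]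
  -- Step C : common value c is nonneg
  set c : ℝ := a t j * deriv (deriv fun s => a s j) t with hc
  have hcomm : ∀ i, deriv (deriv fun u => a u i) t * a t i = c := by
    intro i
    rw [mul_comm]
    exact hgeo t (hIoo ht) i j
  have hsum : c * (∑ i, 1 / (a t i) ^ 2)
      = ∑ i, (deriv (fun u => a u i) t) ^ 2 / (a t i) ^ 2 := by
    have : ∀ i : Fin d, (deriv (deriv fun u => a u i) t * a t i
        - deriv (fun u => a u i) t * deriv (fun u => a u i) t) / (a t i) ^ 2
        = c * (1 / (a t i) ^ 2) - (deriv (fun u => a u i) t) ^ 2 / (a t i) ^ 2 := by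
      intro i
      rw [hcomm i]
      ring
    rw [Finset.sum_congr rfl (fun i _ => this i), Finset.sum_sub_distrib] at hB
    rw [Finset.mul_sum]
    linarith [hB]
  have hposden : (0:ℝ) < ∑ i, 1 / (a t i) ^ 2 := by
    apply Finset.sum_pos
    · intro i _
      have := hpos' t ht i
      positivity
    · have : Nonempty (Fin d) := Fin.pos_iff_nonempty.mp hd
      exact Finset.univ_nonempty
  have hrhs : (0:ℝ) ≤ ∑ i, (deriv (fun u => a u i) t) ^ 2 / (a t i) ^ 2 := by
    apply Finset.sum_nonneg
    intro i _
    positivity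
  have hcnn : 0 ≤ c := by
    by_contra hneg
    push_neg at hneg
    have : c * (∑ i, 1 / (a t i) ^ 2) < 0 := mul_neg_of_neg_of_pos hneg hposden
    linarith [hsum ▸ this]
  have haj : 0 < a t j := hpos' t ht j
  nlinarith [hcnn, haj]

/-- Along a geodesic `a` on the constant-volume surface
`{a ∈ (0,∞)^d : ∏ⱼ aⱼ = r^d}` (the equations `aⱼ·aⱼ''` independent of `j`), each component
`aⱼ` is convex on `[0,1]`; hence `aⱼ(t) ≤ Aⱼ(t) := (1−t)aⱼ(0) + t aⱼ(1)`, and the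
ellipsoids remain nested: `E_{a(t)} ⊆ E_{A(t)}` for all `t ∈ [0,1]`. -/
theorem euler_droplet_nested_in_wasserstein_droplet
    (d : ℕ) (hd : 1 ≤ d) (r : ℝ) (hr : 0 < r)
    (a : ℝ → Fin d → ℝ) (ha : ContDiff ℝ 2 a)
    (hpos : ∀ t ∈ Icc (0:ℝ) 1, ∀ j, 0 < a t j)
    (hvol : ∀ t ∈ Icc (0:ℝ) 1, ∏ j, a t j = r ^ d)
    (hgeo : ∀ t ∈ Icc (0:ℝ) 1, ∀ i j,
      a t i * deriv (deriv fun s => a s i) t = a t j * deriv (deriv fun s => a s j) t) :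
    (∀ j, ConvexOn ℝ (Icc (0:ℝ) 1) (fun t => a t j)) ∧
    (∀ t ∈ Icc (0:ℝ) 1, ∀ j, a t j ≤ (1 - t) * a 0 j + t * a 1 j) ∧
    (∀ t ∈ Icc (0:ℝ) 1,
      {x : EuclideanSpace ℝ (Fin d) | ∑ j, (x j / a t j) ^ 2 < 1} ⊆
        {x : EuclideanSpace ℝ (Fin d) |
          ∑ j, (x j / ((1 - t) * a 0 j + t * a 1 j)) ^ 2 < 1}) := by
  have key := aux_second_deriv_nonneg d hd r hr a ha hpos hvol hgeo
  have hci : ∀ i, ContDiff ℝ 2 (fun s => a s i) := fun i => contDiff_pi.mp ha i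
  have hdiff : ∀ i, Differentiable ℝ (fun s => a s i) := fun i =>
    (hci i).differentiable (by norm_num)
  have hdiff' : ∀ i, Differentiable ℝ (deriv fun s => a s i) := by
    intro i
    have h2 : ContDiff ℝ ((1:WithTop ℕ∞) + 1) (fun s => a s i) := by
      norm_num
      exact hci i
    exact (contDiff_succ_iff_deriv.mp h2).2.2.differentiable one_ne_zero
  have hconv : ∀ j, ConvexOn ℝ (Icc (0:ℝ) 1) (fun t => a t j) := by
    intro j
    apply convexOn_of_deriv2_nonneg (convex_Icc 0 1)
      ((hdiff j).continuous.continuousOn)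
      ((hdiff j).differentiableOn)
      ((hdiff' j).differentiableOn)
    intro x hx
    rw [interior_Icc] at hx
    exact key x hx j
  have hle : ∀ t ∈ Icc (0:ℝ) 1, ∀ j, a t j ≤ (1 - t) * a 0 j + t * a 1 j := by
    intro t ht j
    have h0 : (0:ℝ) ∈ Icc (0:ℝ) 1 := by norm_num
    have h1 : (1:ℝ) ∈ Icc (0:ℝ) 1 := by norm_num
    have := (hconv j).2 h0 h1 (by linarith [ht.2] : (0:ℝ) ≤ 1 - t) ht.1 (by ring)
    simpa using this
  refine ⟨hconv, hle, ?_⟩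
  intro t ht x hx
  simp only [Set.mem_setOf_eq] at hx ⊢
  have hterm : ∀ j, (x j / ((1 - t) * a 0 j + t * a 1 j)) ^ 2 ≤ (x j / a t j) ^ 2 := by
    intro j
    have haj : 0 < a t j := hpos t ht j
    have hAj : a t j ≤ (1 - t) * a 0 j + t * a 1 j := hle t ht j
    rw [div_pow, div_pow]
    apply div_le_div_of_nonneg_left (by positivity) (by positivity)
    exact pow_le_pow_left₀ haj.le hAj 2
  calc ∑ j, (x j / ((1 - t) * a 0 j + t * a 1 j)) ^ 2
      ≤ ∑ j, (x j / a t j) ^ 2 := Finset.sum_le_sum (fun j _ => hterm j)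
    _ < 1 := hx
end

section
/- Let d ≥ 1, r > 0, b ∈ ℝ^d, and â ∈ (0,∞)^d with ∏_{j=1}^d â_j = r^d. Let B(0,r) ⊆ ℝ^d be the open ball of radius r, let E_â = {x : Σ_j (x_j/â_j)² < 1}, and let ω_d be the volume of the unit ball. Then the quadratic Wasserstein distance between the uniform measures satisfies d_W(1_{B(0,r)} dx, 1_{b+E_â} dx)² = ω_d r^d ( |b|² + |â − (r, …, r)|²/(d+2) ), and the infimum over couplings is attained by the coupling induced by the linear map x ↦ b + (â_1 x_1/r, …, â_d x_d/r), i.e. by the pushforward of 1_{B(0,r)} dx under x ↦ (x, b + (â_1 x_1/r, …, â_d x_d/r)). -/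
open Set MeasureTheory
open scoped ENNReal

/-- Squared quadratic Wasserstein cost between two measures on `ℝ^d`, as the infimum over
couplings of the integral of the squared distance. -/
noncomputable def W2sq {d : ℕ}
    (μ ν : Measure (EuclideanSpace ℝ (Fin d))) : ℝ≥0∞ :=
  sInf { C | ∃ π : Measure (EuclideanSpace ℝ (Fin d) × EuclideanSpace ℝ (Fin d)),
    π.map Prod.fst = μ ∧ π.map Prod.snd = ν ∧
    C = ∫⁻ q, ENNReal.ofReal (‖q.1 - q.2‖ ^ 2) ∂π }

open Metric
set_option linter.unusedSectionVars false
set_option maxHeartbeats 1000000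

variable {d : ℕ}

lemma intble_ball {r : ℝ} {f : EuclideanSpace ℝ (Fin d) → ℝ} (hf : Continuous f) :
    IntegrableOn f (ball (0 : EuclideanSpace ℝ (Fin d)) r) :=
  (hf.continuousOn.integrableOn_compact (isCompact_closedBall _ _)).mono_set
    ball_subset_closedBall

lemma vol_ball_toReal (hd : 1 ≤ d) {r : ℝ} (hr : 0 < r) :
    (volume (ball (0 : EuclideanSpace ℝ (Fin d)) r)).toReal =
      (volume (ball (0 : EuclideanSpace ℝ (Fin d)) 1)).toReal * r ^ d := by
  haveI : Nonempty (Fin d) := ⟨⟨0, hd⟩⟩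
  haveI : Nontrivial (EuclideanSpace ℝ (Fin d)) := by
    refine ⟨0, EuclideanSpace.single ⟨0, hd⟩ 1, fun h => ?_⟩
    have := congrArg (fun v : EuclideanSpace ℝ (Fin d) => v ⟨0, hd⟩) h.symm
    simp [EuclideanSpace.single_apply] at this
  rw [Measure.addHaar_ball volume 0 hr.le, finrank_euclideanSpace_fin,
    ENNReal.toReal_mul, ENNReal.toReal_ofReal (by positivity)]
  ring

lemma ball_coord_sq_int (hd : 1 ≤ d) {r : ℝ} (hr : 0 < r) (j : Fin d) :
    ∫ x in ball (0 : EuclideanSpace ℝ (Fin d)) r, (x j) ^ 2 =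
      (volume (ball (0 : EuclideanSpace ℝ (Fin d)) 1)).toReal * r ^ (d + 2) / (d + 2) := by
  haveI : Nonempty (Fin d) := ⟨⟨0, hd⟩⟩
  haveI : Nontrivial (EuclideanSpace ℝ (Fin d)) := by
    refine ⟨0, EuclideanSpace.single j 1, fun h => ?_⟩
    have := congrArg (fun v : EuclideanSpace ℝ (Fin d) => v j) h.symm
    simp [EuclideanSpace.single_apply] at this
  set ω := (volume (ball (0 : EuclideanSpace ℝ (Fin d)) 1)).toReal with hω
  -- integrability of coordinate squares
  have hint : ∀ k : Fin d, IntegrableOn (fun x : EuclideanSpace ℝ (Fin d) => (x k) ^ 2)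
      (ball (0 : EuclideanSpace ℝ (Fin d)) r) := by
    intro k
    have hc : Continuous fun x : EuclideanSpace ℝ (Fin d) => (x k) ^ 2 :=
      ((EuclideanSpace.proj k).continuous).pow 2
    exact (hc.continuousOn.integrableOn_compact (isCompact_closedBall _ _)).mono_set
      ball_subset_closedBall
  -- all coordinates have the same integral
  have hsymm : ∀ k : Fin d, ∫ x in ball (0 : EuclideanSpace ℝ (Fin d)) r, (x k) ^ 2 =
      ∫ x in ball (0 : EuclideanSpace ℝ (Fin d)) r, (x j) ^ 2 := by
    intro k
    set f := LinearIsometryEquiv.piLpCongrLeft 2 ℝ ℝ (Equiv.swap j k)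
    have hmp : MeasurePreserving f volume volume := f.measurePreserving
    have hball : f ⁻¹' (ball (0 : EuclideanSpace ℝ (Fin d)) r) = ball 0 r := by
      ext x
      simp [mem_ball_zero_iff, f.norm_map]
    have hmpr : MeasurePreserving f (volume.restrict (ball (0 : EuclideanSpace ℝ (Fin d)) r))
        (volume.restrict (ball (0 : EuclideanSpace ℝ (Fin d)) r)) := by
      have := hmp.restrict_preimage (measurableSet_ball (x := (0 : EuclideanSpace ℝ (Fin d))) (ε := r))
      rwa [hball] at this
    have := hmpr.integral_comp (f.toHomeomorph.measurableEmbedding)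
      (fun x : EuclideanSpace ℝ (Fin d) => (x k) ^ 2)
    rw [← this]
    congr 1
    ext x
    have : f x k = x j := by
      simp only [f, LinearIsometryEquiv.piLpCongrLeft_apply, Equiv.piCongrLeft'_apply,
        Equiv.symm_swap]
      rw [Equiv.swap_apply_right]
    rw [this]
  -- sum of the coordinate squares integrates to the integral of the squared norm
  have hnormsq : ∀ x : EuclideanSpace ℝ (Fin d), ‖x‖ ^ 2 = ∑ k, (x k) ^ 2 := by
    intro x
    rw [EuclideanSpace.norm_eq, Real.sq_sqrt (by positivity)]
    simp [Real.norm_eq_abs, sq_abs]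
  have hsum : ∫ x in ball (0 : EuclideanSpace ℝ (Fin d)) r, ‖x‖ ^ 2 =
      (d : ℝ) * ∫ x in ball (0 : EuclideanSpace ℝ (Fin d)) r, (x j) ^ 2 := by
    calc ∫ x in ball (0 : EuclideanSpace ℝ (Fin d)) r, ‖x‖ ^ 2
        = ∫ x in ball (0 : EuclideanSpace ℝ (Fin d)) r, ∑ k, (x k) ^ 2 := by
          simp_rw [hnormsq]
      _ = ∑ k, ∫ x in ball (0 : EuclideanSpace ℝ (Fin d)) r, (x k) ^ 2 :=
          integral_finset_sum _ (fun k _ => hint k)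
      _ = ∑ _k : Fin d, ∫ x in ball (0 : EuclideanSpace ℝ (Fin d)) r, (x j) ^ 2 := by
          exact Finset.sum_congr rfl (fun k _ => hsymm k)
      _ = (d : ℝ) * ∫ x in ball (0 : EuclideanSpace ℝ (Fin d)) r, (x j) ^ 2 := by
          simp [Finset.sum_const, nsmul_eq_mul]
  -- compute the integral of the squared norm by the polar-coordinates formula
  have hpolar : ∫ x in ball (0 : EuclideanSpace ℝ (Fin d)) r, ‖x‖ ^ 2 =
      (d : ℝ) * (ω * (r ^ (d + 2) / (d + 2))) := by
    have h1 := integral_fun_norm_addHaar (volume : Measure (EuclideanSpace ℝ (Fin d)))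
      (Set.indicator (Iio r) (fun y : ℝ => y ^ 2))
    rw [finrank_euclideanSpace_fin] at h1
    have hL : ∫ x : EuclideanSpace ℝ (Fin d),
        Set.indicator (Iio r) (fun y : ℝ => y ^ 2) ‖x‖ =
        ∫ x in ball (0 : EuclideanSpace ℝ (Fin d)) r, ‖x‖ ^ 2 := by
      rw [← integral_indicator measurableSet_ball]
      congr 1
      ext x
      by_cases hx : x ∈ ball (0 : EuclideanSpace ℝ (Fin d)) r
      · rw [Set.indicator_of_mem hx, Set.indicator_of_mem (by simpa [mem_ball_zero_iff] using hx)]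
      · rw [Set.indicator_of_notMem hx,
          Set.indicator_of_notMem (by simpa [mem_ball_zero_iff] using hx)]
    have hR : ∫ y in Ioi (0 : ℝ), y ^ (d - 1) • Set.indicator (Iio r) (fun y : ℝ => y ^ 2) y =
        r ^ (d + 2) / (d + 2) := by
      have heq : ∀ y : ℝ, y ^ (d - 1) • Set.indicator (Iio r) (fun y : ℝ => y ^ 2) y =
          Set.indicator (Iio r) (fun y : ℝ => y ^ (d + 1)) y := by
        intro y
        by_cases hy : y ∈ Iio r
        · rw [Set.indicator_of_mem hy, Set.indicator_of_mem hy, smul_eq_mul, ← pow_add]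
          congr 1
          omega
        · rw [Set.indicator_of_notMem hy, Set.indicator_of_notMem hy, smul_zero]
      simp_rw [heq]
      rw [integral_indicator measurableSet_Iio, Measure.restrict_restrict measurableSet_Iio]
      have : Iio r ∩ Ioi (0 : ℝ) = Ioo 0 r := by ext y; simp [mem_Ioo, and_comm]
      rw [this, ← integral_Ioc_eq_integral_Ioo, ← intervalIntegral.integral_of_le hr.le,
        integral_pow]
      push_cast
      ring
    rw [hL, hR] at h1
    rw [h1, nsmul_eq_mul, smul_eq_mul, hω]; rfl
  rw [hsum] at hpolar
  have hd0 : (d : ℝ) ≠ 0 := by positivity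
  have h2 := mul_left_cancel₀ hd0 hpolar
  rw [h2]; ring
lemma ball_coord_int {r : ℝ} (j : Fin d) :
    ∫ x in ball (0 : EuclideanSpace ℝ (Fin d)) r, x j = 0 := by
  have hmp : MeasurePreserving (fun x : EuclideanSpace ℝ (Fin d) => -x) volume volume :=
    Measure.measurePreserving_neg _
  have hball : (fun x : EuclideanSpace ℝ (Fin d) => -x) ⁻¹' (ball 0 r) = ball 0 r := by
    ext x; simp [mem_ball_zero_iff]
  have hmpr : MeasurePreserving (fun x : EuclideanSpace ℝ (Fin d) => -x)
      (volume.restrict (ball (0 : EuclideanSpace ℝ (Fin d)) r))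
      (volume.restrict (ball (0 : EuclideanSpace ℝ (Fin d)) r)) := by
    have := hmp.restrict_preimage (measurableSet_ball (x := (0 : EuclideanSpace ℝ (Fin d))) (ε := r))
    rwa [hball] at this
  have hemb : MeasurableEmbedding (fun x : EuclideanSpace ℝ (Fin d) => -x) :=
    (Homeomorph.neg (EuclideanSpace ℝ (Fin d))).measurableEmbedding
  have h := hmpr.integral_comp hemb (fun x : EuclideanSpace ℝ (Fin d) => x j)
  have h2 : ∫ x in ball (0 : EuclideanSpace ℝ (Fin d)) r, (-x) j =
      ∫ x in ball (0 : EuclideanSpace ℝ (Fin d)) r, x j := h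
  have h3 : ∫ x in ball (0 : EuclideanSpace ℝ (Fin d)) r, (-x) j =
      - ∫ x in ball (0 : EuclideanSpace ℝ (Fin d)) r, x j := by
    rw [← integral_neg]
    congr 1
  linarith [h2, h3]


noncomputable def diagEquiv (t : Fin d → ℝ) (ht : ∀ j, t j ≠ 0) :
    EuclideanSpace ℝ (Fin d) ≃ₗ[ℝ] EuclideanSpace ℝ (Fin d) where
  toFun x := WithLp.toLp 2 (fun j => t j * x j)
  invFun y := WithLp.toLp 2 (fun j => (t j)⁻¹ * y j)
  map_add' x y := by ext j; simp [mul_add]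
  map_smul' c x := by ext j; simp [smul_eq_mul]; ring
  left_inv x := by ext j; exact inv_mul_cancel_left₀ (ht j) _
  right_inv y := by ext j; exact mul_inv_cancel_left₀ (ht j) _

lemma diagEquiv_det (t : Fin d → ℝ) (ht : ∀ j, t j ≠ 0) :
    LinearMap.det ((diagEquiv t ht).toLinearMap) = ∏ j, t j := by
  classical
  let B := (EuclideanSpace.basisFun (Fin d) ℝ).toBasis
  rw [← LinearMap.det_toMatrix B]
  have : LinearMap.toMatrix B B ((diagEquiv t ht).toLinearMap) = Matrix.diagonal t := by
    ext i j
    simp [LinearMap.toMatrix_apply, B, diagEquiv, Matrix.diagonal, EuclideanSpace.basisFun_apply,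
      EuclideanSpace.single_apply, mul_ite, eq_comm]
  rw [this, Matrix.det_diagonal]

section main
variable (r : ℝ) (hr : 0 < r) (b : EuclideanSpace ℝ (Fin d)) (ahat : Fin d → ℝ)
  (hpos : ∀ j, 0 < ahat j)

include hr hpos in
lemma diag_volume_map (hprod : ∏ j, ahat j = r ^ d) :
    Measure.map (diagEquiv (fun j => ahat j / r) (fun j => by
      have := hpos j; positivity)) volume = volume := by
  set L := diagEquiv (fun j => ahat j / r) (fun j => by have := hpos j; positivity)
  have hdet : LinearMap.det L.toLinearMap = 1 := by
    rw [diagEquiv_det, Finset.prod_div_distrib, hprod, Finset.prod_const, Finset.card_univ,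
      Fintype.card_fin, div_self (by positivity)]
  have := Measure.map_linearMap_addHaar_eq_smul_addHaar
    (volume : Measure (EuclideanSpace ℝ (Fin d))) (f := L.toLinearMap) (by rw [hdet]; norm_num)
  simpa [hdet] using this

end main

lemma coord_ineq (a r p q c : ℝ) (ha : 0 < a) (hr : 0 < r) :
    (p - (c + a * p / r)) ^ 2 +
      ((q ^ 2 - (r / a) * (q - c) ^ 2) -
        ((c + a * p / r) ^ 2 - (r / a) * ((c + a * p / r) - c) ^ 2)) ≤ (p - q) ^ 2 := by
  rw [← sub_nonneg]
  have key : (p - q) ^ 2 - ((p - (c + a * p / r)) ^ 2 +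
      ((q ^ 2 - (r / a) * (q - c) ^ 2) -
        ((c + a * p / r) ^ 2 - (r / a) * ((c + a * p / r) - c) ^ 2))) =
      (r / a) * (a / r * p - (q - c)) ^ 2 := by
    field_simp
    ring
  rw [key]
  positivity

section withS
variable {r : ℝ} (hr : 0 < r) {b : EuclideanSpace ℝ (Fin d)} {ahat : Fin d → ℝ}
  (hpos : ∀ j, 0 < ahat j)
  {S : EuclideanSpace ℝ (Fin d) → EuclideanSpace ℝ (Fin d)}
  (hS : ∀ x, ∀ j, S x j = b j + ahat j * x j / r)

include hr hpos hS

lemma S_eq : S = fun x => b +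
    (diagEquiv (fun j => ahat j / r) (fun j => by have := hpos j; positivity)) x := by
  funext x
  ext j
  rw [hS]
  show _ = b j + (ahat j / r * x j)
  ring

lemma S_cont : Continuous S := by
  rw [S_eq hr hpos hS]
  exact continuous_const.add (LinearMap.continuous_of_finiteDimensional _)

lemma S_map_volume (hprod : ∏ j, ahat j = r ^ d) : Measure.map S volume = volume := by
  rw [S_eq hr hpos hS]
  set L := diagEquiv (fun j => ahat j / r) (fun j => by have := hpos j; positivity)
  have hLc : Continuous L := LinearMap.continuous_of_finiteDimensional _
  have : (fun x : EuclideanSpace ℝ (Fin d) => b + L x) = (fun y => b + y) ∘ L := rfl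
  rw [this, ← Measure.map_map (by fun_prop) hLc.measurable,
    diag_volume_map r hr ahat hpos hprod, (measurePreserving_add_left volume b).map_eq]

omit hpos hS in
lemma ball_iff (x : EuclideanSpace ℝ (Fin d)) :
    x ∈ ball (0 : EuclideanSpace ℝ (Fin d)) r ↔ ∑ j, (x j) ^ 2 < r ^ 2 := by
  have hn : ‖x‖ ^ 2 = ∑ j, (x j) ^ 2 := by
    rw [EuclideanSpace.norm_eq, Real.sq_sqrt (by positivity)]
    simp [Real.norm_eq_abs, sq_abs]
  rw [mem_ball_zero_iff, ← hn]
  constructor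
  · intro h; nlinarith [norm_nonneg x]
  · intro h; nlinarith [norm_nonneg x]

lemma mem_T_iff (y : EuclideanSpace ℝ (Fin d)) :
    y ∈ (fun z => b + z) '' {x : EuclideanSpace ℝ (Fin d) | ∑ j, (x j / ahat j) ^ 2 < 1} ↔
      ∑ j, ((y j - b j) / ahat j) ^ 2 < 1 := by
  constructor
  · rintro ⟨x, hx, rfl⟩
    have : ∀ j, (b + x) j - b j = x j := by intro j; simp
    simpa [this] using hx
  · intro h
    exact ⟨y - b, by simpa using h, by show b + (y - b) = y; rw [add_comm, sub_add_cancel]⟩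

lemma S_preimage_T :
    S ⁻¹' ((fun z => b + z) '' {x : EuclideanSpace ℝ (Fin d) | ∑ j, (x j / ahat j) ^ 2 < 1}) =
      ball (0 : EuclideanSpace ℝ (Fin d)) r := by
  ext x
  rw [mem_preimage, mem_T_iff hr hpos hS, ball_iff hr]
  have hterm : ∀ j : Fin d, ((S x j - b j) / ahat j) ^ 2 = (x j) ^ 2 / r ^ 2 := by
    intro j
    rw [hS]
    have ha := (hpos j).ne'
    field_simp
    ring
  simp_rw [hterm, ← Finset.sum_div]
  rw [div_lt_one (by positivity)]

lemma T_measurable :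
    MeasurableSet ((fun z => b + z) ''
      {x : EuclideanSpace ℝ (Fin d) | ∑ j, (x j / ahat j) ^ 2 < 1}) := by
  have : ((fun z => b + z) '' {x : EuclideanSpace ℝ (Fin d) | ∑ j, (x j / ahat j) ^ 2 < 1}) =
      {y : EuclideanSpace ℝ (Fin d) | ∑ j, ((y j - b j) / ahat j) ^ 2 < 1} := by
    ext y; exact mem_T_iff hr hpos hS y
  rw [this]
  have hc : Continuous fun y : EuclideanSpace ℝ (Fin d) => ∑ j, ((y j - b j) / ahat j) ^ 2 := by
    refine continuous_finset_sum _ (fun j _ => ?_)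
    exact (((EuclideanSpace.proj j).continuous.sub continuous_const).div_const _).pow 2
  exact measurableSet_lt hc.measurable measurable_const

lemma S_map_restrict (hprod : ∏ j, ahat j = r ^ d) :
    Measure.map S (volume.restrict (ball (0 : EuclideanSpace ℝ (Fin d)) r)) =
      volume.restrict ((fun z => b + z) ''
        {x : EuclideanSpace ℝ (Fin d) | ∑ j, (x j / ahat j) ^ 2 < 1}) := by
  have h1 := Measure.restrict_map (μ := (volume : Measure (EuclideanSpace ℝ (Fin d))))
    (S_cont hr hpos hS).measurable (T_measurable hr hpos hS)
  rw [S_map_volume hr hpos hS hprod, S_preimage_T hr hpos hS] at h1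
  exact h1.symm

end withS

section value
variable {r : ℝ} (hr : 0 < r) {b : EuclideanSpace ℝ (Fin d)} {ahat : Fin d → ℝ}
  (hpos : ∀ j, 0 < ahat j)
  {S : EuclideanSpace ℝ (Fin d) → EuclideanSpace ℝ (Fin d)}
  (hS : ∀ x, ∀ j, S x j = b j + ahat j * x j / r)

include hr hpos hS in
lemma value_int (hd : 1 ≤ d) :
    ∫ x in ball (0 : EuclideanSpace ℝ (Fin d)) r, ‖x - S x‖ ^ 2 =
      (volume (ball (0 : EuclideanSpace ℝ (Fin d)) 1)).toReal * r ^ d *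
        (‖b‖ ^ 2 + (∑ j, (ahat j - r) ^ 2) / (d + 2)) := by
  set ω := (volume (ball (0 : EuclideanSpace ℝ (Fin d)) 1)).toReal with hω
  set c : Fin d → ℝ := fun j => 1 - ahat j / r with hc
  have hfj : ∀ (x : EuclideanSpace ℝ (Fin d)) (j : Fin d),
      ((x - S x) j) ^ 2 = c j ^ 2 * (x j) ^ 2 + ((-2 * (b j * c j)) * x j + (b j) ^ 2) := by
    intro x j
    have : (x - S x) j = x j - S x j := rfl
    rw [this, hS, hc]
    have hr' : r ≠ 0 := hr.ne'
    field_simp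
    ring
  have hnormsq : ∀ x : EuclideanSpace ℝ (Fin d), ‖x - S x‖ ^ 2 = ∑ j, ((x - S x) j) ^ 2 := by
    intro x
    rw [EuclideanSpace.norm_eq, Real.sq_sqrt (by positivity)]
    simp [Real.norm_eq_abs, sq_abs]
  have hcont : ∀ j : Fin d, Continuous fun x : EuclideanSpace ℝ (Fin d) => x j := fun j =>
    (EuclideanSpace.proj j).continuous
  have hint1 : ∀ j : Fin d, IntegrableOn
      (fun x : EuclideanSpace ℝ (Fin d) => c j ^ 2 * (x j) ^ 2) (ball 0 r) :=
    fun j => intble_ball (by continuity)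
  have hint2 : ∀ j : Fin d, IntegrableOn
      (fun x : EuclideanSpace ℝ (Fin d) => (-2 * (b j * c j)) * x j + (b j) ^ 2) (ball 0 r) :=
    fun j => intble_ball (by continuity)
  calc ∫ x in ball (0 : EuclideanSpace ℝ (Fin d)) r, ‖x - S x‖ ^ 2
      = ∑ j, ∫ x in ball (0 : EuclideanSpace ℝ (Fin d)) r,
          (c j ^ 2 * (x j) ^ 2 + ((-2 * (b j * c j)) * x j + (b j) ^ 2)) := by
        rw [← integral_finset_sum]
        · congr 1; ext x; rw [hnormsq]; exact Finset.sum_congr rfl fun j _ => hfj x j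
        · exact fun j _ => (hint1 j).add (hint2 j)
    _ = ∑ j, (c j ^ 2 * (ω * r ^ (d + 2) / (d + 2)) + (b j) ^ 2 * (ω * r ^ d)) := by
        refine Finset.sum_congr rfl fun j _ => ?_
        rw [integral_add (hint1 j) (hint2 j), integral_add (intble_ball (by continuity))
          (integrableOn_const measure_ball_lt_top.ne), integral_const_mul,
          integral_const_mul, ball_coord_sq_int hd hr j, ball_coord_int j, integral_const]
        simp only [smul_eq_mul, mul_zero, add_zero, zero_add, Measure.real, Measure.restrict_apply_univ]
        rw [vol_ball_toReal hd hr, ← hω]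
        ring
    _ = ω * r ^ d * (‖b‖ ^ 2 + (∑ j, (ahat j - r) ^ 2) / (d + 2)) := by
        have hb : ‖b‖ ^ 2 = ∑ j, (b j) ^ 2 := by
          rw [EuclideanSpace.norm_eq, Real.sq_sqrt (by positivity)]
          simp [Real.norm_eq_abs, sq_abs]
        have hterm : ∀ j : Fin d, c j ^ 2 * (ω * r ^ (d + 2) / (d + 2)) =
            ω * r ^ d * ((ahat j - r) ^ 2 / (d + 2)) := by
          intro j
          have h0 : (1 - ahat j / r) * r = r - ahat j := by
            rw [sub_mul, one_mul, div_mul_cancel₀ _ hr.ne']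
          have h1 : c j ^ 2 * r ^ 2 = (ahat j - r) ^ 2 := by
            rw [hc, ← mul_pow, h0]; ring
          rw [pow_add]
          linear_combination (ω * r ^ d / ((d : ℝ) + 2)) * h1
        simp_rw [hterm]
        rw [Finset.sum_add_distrib, ← Finset.mul_sum, ← Finset.sum_div, ← Finset.sum_mul, hb]
        ring
end value

noncomputable def psi (r : ℝ) (b : EuclideanSpace ℝ (Fin d)) (ahat : Fin d → ℝ)
    (y : EuclideanSpace ℝ (Fin d)) : ℝ :=
  ∑ j, ((y j) ^ 2 - (r / ahat j) * (y j - b j) ^ 2)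

lemma psi_cont (r : ℝ) (b : EuclideanSpace ℝ (Fin d)) (ahat : Fin d → ℝ) :
    Continuous (psi r b ahat) := by
  refine continuous_finset_sum _ (fun j _ => ?_)
  exact (((EuclideanSpace.proj j).continuous).pow 2).sub
    (continuous_const.mul ((((EuclideanSpace.proj j).continuous).sub continuous_const).pow 2))

section keyineq
variable {r : ℝ} (hr : 0 < r) {b : EuclideanSpace ℝ (Fin d)} {ahat : Fin d → ℝ}
  (hpos : ∀ j, 0 < ahat j)
  {S : EuclideanSpace ℝ (Fin d) → EuclideanSpace ℝ (Fin d)}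
  (hS : ∀ x, ∀ j, S x j = b j + ahat j * x j / r)

include hr hpos hS in
lemma key_ineq (x y : EuclideanSpace ℝ (Fin d)) :
    ‖x - S x‖ ^ 2 + (psi r b ahat y - psi r b ahat (S x)) ≤ ‖x - y‖ ^ 2 := by
  have hns : ∀ v : EuclideanSpace ℝ (Fin d), ‖v‖ ^ 2 = ∑ j, (v j) ^ 2 := by
    intro v
    rw [EuclideanSpace.norm_eq, Real.sq_sqrt (by positivity)]
    simp [Real.norm_eq_abs, sq_abs]
  have hsub : ∀ (v w : EuclideanSpace ℝ (Fin d)) (j : Fin d), (v - w) j = v j - w j :=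
    fun v w j => rfl
  rw [hns, hns]
  simp_rw [hsub, psi]
  rw [← Finset.sum_sub_distrib, ← Finset.sum_add_distrib]
  refine Finset.sum_le_sum (fun j _ => ?_)
  rw [hS]
  exact coord_ineq (ahat j) r (x j) (y j) (b j) (hpos j) hr

include hr hpos hS in
lemma lower_bound (hd : 1 ≤ d) (hprod : ∏ j, ahat j = r ^ d)
    (π : Measure (EuclideanSpace ℝ (Fin d) × EuclideanSpace ℝ (Fin d)))
    (h1 : π.map Prod.fst = volume.restrict (ball (0 : EuclideanSpace ℝ (Fin d)) r))
    (h2 : π.map Prod.snd = volume.restrict ((fun z => b + z) ''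
      {x : EuclideanSpace ℝ (Fin d) | ∑ j, (x j / ahat j) ^ 2 < 1})) :
    ENNReal.ofReal (∫ x in ball (0 : EuclideanSpace ℝ (Fin d)) r, ‖x - S x‖ ^ 2) ≤
      ∫⁻ q, ENNReal.ofReal (‖q.1 - q.2‖ ^ 2) ∂π := by
  classical
  by_cases hfin : (∫⁻ q, ENNReal.ofReal (‖q.1 - q.2‖ ^ 2) ∂π) = ∞
  · rw [hfin]; exact le_top
  set μ := volume.restrict (ball (0 : EuclideanSpace ℝ (Fin d)) r) with hμ
  set T := (fun z => b + z) '' {x : EuclideanSpace ℝ (Fin d) | ∑ j, (x j / ahat j) ^ 2 < 1}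
    with hT
  haveI : IsFiniteMeasure π := by
    constructor
    have : π univ = (π.map Prod.fst) univ := (Measure.map_apply measurable_fst .univ).symm
    rw [this, h1, hμ, Measure.restrict_apply_univ]
    exact measure_ball_lt_top
  have hScont : Continuous S := S_cont hr hpos hS
  have hgc : Continuous fun x : EuclideanSpace ℝ (Fin d) => ‖x - S x‖ ^ 2 :=
    (continuous_id.sub hScont).norm.pow 2
  have hpsc : Continuous fun x : EuclideanSpace ℝ (Fin d) => psi r b ahat (S x) :=
    (psi_cont r b ahat).comp hScont
  have hcostc : Continuous fun q : EuclideanSpace ℝ (Fin d) × EuclideanSpace ℝ (Fin d) =>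
      ‖q.1 - q.2‖ ^ 2 := (continuous_fst.sub continuous_snd).norm.pow 2
  have hcost_int : Integrable
      (fun q : EuclideanSpace ℝ (Fin d) × EuclideanSpace ℝ (Fin d) => ‖q.1 - q.2‖ ^ 2) π := by
    refine ⟨hcostc.aestronglyMeasurable, ?_⟩
    rw [hasFiniteIntegral_iff_ofReal (Filter.Eventually.of_forall fun q => by positivity)]
    exact lt_top_iff_ne_top.2 hfin
  -- integrable pieces
  have hg1 : Integrable (fun x => ‖x - S x‖ ^ 2) μ := intble_ball hgc
  have hψS : Integrable (fun x => psi r b ahat (S x)) μ := intble_ball hpsc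
  have hmapS : Measure.map S μ = volume.restrict T := S_map_restrict hr hpos hS hprod
  have hψν : Integrable (psi r b ahat) (volume.restrict T) := by
    rw [← hmapS]
    exact (integrable_map_measure ((psi_cont r b ahat).aestronglyMeasurable)
      hScont.measurable.aemeasurable).2 hψS
  -- lift to π
  have hg1π : Integrable (fun q : EuclideanSpace ℝ (Fin d) × EuclideanSpace ℝ (Fin d) =>
      ‖q.1 - S q.1‖ ^ 2) π := by
    exact (integrable_map_measure hgc.aestronglyMeasurable
      measurable_fst.aemeasurable (μ := π)).1 (by rw [h1]; exact hg1)
  have hψSπ : Integrable (fun q : EuclideanSpace ℝ (Fin d) × EuclideanSpace ℝ (Fin d) =>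
      psi r b ahat (S q.1)) π := by
    exact (integrable_map_measure hpsc.aestronglyMeasurable
      measurable_fst.aemeasurable (μ := π)).1 (by rw [h1]; exact hψS)
  have hψνπ : Integrable (fun q : EuclideanSpace ℝ (Fin d) × EuclideanSpace ℝ (Fin d) =>
      psi r b ahat q.2) π := by
    exact (integrable_map_measure ((psi_cont r b ahat).aestronglyMeasurable)
      measurable_snd.aemeasurable (μ := π)).1 (by rw [h2]; exact hψν)
  -- integral identities
  have hi1 : ∫ q, ‖q.1 - S q.1‖ ^ 2 ∂π = ∫ x, ‖x - S x‖ ^ 2 ∂μ := by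
    rw [← h1, integral_map measurable_fst.aemeasurable hgc.aestronglyMeasurable]
  have hi2 : ∫ q, psi r b ahat q.2 ∂π = ∫ y, psi r b ahat y ∂(volume.restrict T) := by
    rw [← h2, integral_map measurable_snd.aemeasurable
      ((psi_cont r b ahat).aestronglyMeasurable)]
  have hi3 : ∫ q, psi r b ahat (S q.1) ∂π = ∫ y, psi r b ahat y ∂(volume.restrict T) := by
    rw [← hmapS,
      integral_map hScont.measurable.aemeasurable ((psi_cont r b ahat).aestronglyMeasurable),
      ← h1, integral_map measurable_fst.aemeasurable hpsc.aestronglyMeasurable]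
  -- the real inequality
  have hsub : Integrable (fun q : EuclideanSpace ℝ (Fin d) × EuclideanSpace ℝ (Fin d) =>
      psi r b ahat q.2 - psi r b ahat (S q.1)) π := hψνπ.sub hψSπ
  have hreal : ∫ x, ‖x - S x‖ ^ 2 ∂μ ≤ ∫ q, ‖q.1 - q.2‖ ^ 2 ∂π := by
    have hmono : ∫ q, (‖q.1 - S q.1‖ ^ 2 + (psi r b ahat q.2 - psi r b ahat (S q.1))) ∂π ≤
        ∫ q, ‖q.1 - q.2‖ ^ 2 ∂π := by
      refine integral_mono (hg1π.add hsub) hcost_int ?_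
      intro q
      exact key_ineq hr hpos hS q.1 q.2
    rw [integral_add hg1π hsub, integral_sub hψνπ hψSπ, hi1, hi2, hi3] at hmono
    linarith
  rw [← ofReal_integral_eq_lintegral_ofReal hcost_int
    (Filter.Eventually.of_forall fun q => by positivity)]
  exact ENNReal.ofReal_le_ofReal hreal

end keyineq

section final
variable {r : ℝ} (hr : 0 < r) {b : EuclideanSpace ℝ (Fin d)} {ahat : Fin d → ℝ}
  (hpos : ∀ j, 0 < ahat j)
  {S : EuclideanSpace ℝ (Fin d) → EuclideanSpace ℝ (Fin d)}
  (hS : ∀ x, ∀ j, S x j = b j + ahat j * x j / r)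

include hr hpos hS

lemma map_cost :
    ∫⁻ q, ENNReal.ofReal (‖q.1 - q.2‖ ^ 2)
        ∂(Measure.map (fun x => (x, S x))
          (volume.restrict (ball (0 : EuclideanSpace ℝ (Fin d)) r))) =
      ENNReal.ofReal (∫ x in ball (0 : EuclideanSpace ℝ (Fin d)) r, ‖x - S x‖ ^ 2) := by
  have hScont := S_cont hr hpos hS
  have hgc : Continuous fun x : EuclideanSpace ℝ (Fin d) => ‖x - S x‖ ^ 2 :=
    (continuous_id.sub hScont).norm.pow 2
  have hpair : Measurable fun x : EuclideanSpace ℝ (Fin d) => (x, S x) :=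
    measurable_id.prodMk hScont.measurable
  rw [lintegral_map (f := fun q : EuclideanSpace ℝ (Fin d) × EuclideanSpace ℝ (Fin d) =>
      ENNReal.ofReal (‖q.1 - q.2‖ ^ 2)) (((continuous_fst.sub continuous_snd).norm.pow 2).measurable.ennreal_ofReal)
    hpair, ← ofReal_integral_eq_lintegral_ofReal (intble_ball hgc)
    (Filter.Eventually.of_forall fun x => by positivity)]

lemma marg_fst :
    (Measure.map (fun x => (x, S x))
        (volume.restrict (ball (0 : EuclideanSpace ℝ (Fin d)) r))).map Prod.fst =
      volume.restrict (ball (0 : EuclideanSpace ℝ (Fin d)) r) := by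
  have hScont := S_cont hr hpos hS
  have hpair : Measurable fun x : EuclideanSpace ℝ (Fin d) => (x, S x) :=
    measurable_id.prodMk hScont.measurable
  rw [Measure.map_map measurable_fst hpair]
  have : Prod.fst ∘ (fun x : EuclideanSpace ℝ (Fin d) => (x, S x)) = id := rfl
  rw [this, Measure.map_id]

lemma marg_snd (hprod : ∏ j, ahat j = r ^ d) :
    (Measure.map (fun x => (x, S x))
        (volume.restrict (ball (0 : EuclideanSpace ℝ (Fin d)) r))).map Prod.snd =
      volume.restrict ((fun y => b + y) ''
        {x : EuclideanSpace ℝ (Fin d) | ∑ j, (x j / ahat j) ^ 2 < 1}) := by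
  have hScont := S_cont hr hpos hS
  have hpair : Measurable fun x : EuclideanSpace ℝ (Fin d) => (x, S x) :=
    measurable_id.prodMk hScont.measurable
  rw [Measure.map_map measurable_snd hpair]
  have : Prod.snd ∘ (fun x : EuclideanSpace ℝ (Fin d) => (x, S x)) = S := rfl
  rw [this]
  exact S_map_restrict hr hpos hS hprod

end final


/-- The squared Wasserstein distance between the uniform measure on the
ball `B(0,r)` and on the translated co-axial ellipsoid `b + E_â` (of equal volume,
`∏ âⱼ = r^d`) equals `ω_d r^d (|b|² + |â − (r,…,r)|²/(d+2))`, and the infimum is attained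
by the coupling induced by the linear map `x ↦ b + (â₁x₁/r, …, â_d x_d/r)`. -/
theorem wasserstein_ball_to_ellipsoid
    (d : ℕ) (hd : 1 ≤ d) (r : ℝ) (hr : 0 < r) (b : EuclideanSpace ℝ (Fin d))
    (ahat : Fin d → ℝ) (hpos : ∀ j, 0 < ahat j) (hprod : ∏ j, ahat j = r ^ d)
    (S : EuclideanSpace ℝ (Fin d) → EuclideanSpace ℝ (Fin d))
    (hS : ∀ x, ∀ j, S x j = b j + ahat j * x j / r) :
    W2sq (volume.restrict (Metric.ball (0 : EuclideanSpace ℝ (Fin d)) r))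
        (volume.restrict ((fun y => b + y) ''
          {x : EuclideanSpace ℝ (Fin d) | ∑ j, (x j / ahat j) ^ 2 < 1})) =
      ENNReal.ofReal
        ((volume (Metric.ball (0 : EuclideanSpace ℝ (Fin d)) 1)).toReal * r ^ d *
          (‖b‖ ^ 2 + (∑ j, (ahat j - r) ^ 2) / (d + 2))) ∧
    ((Measure.map (fun x => (x, S x))
        (volume.restrict (Metric.ball (0 : EuclideanSpace ℝ (Fin d)) r))).map Prod.fst =
        volume.restrict (Metric.ball (0 : EuclideanSpace ℝ (Fin d)) r)) ∧
    ((Measure.map (fun x => (x, S x))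
        (volume.restrict (Metric.ball (0 : EuclideanSpace ℝ (Fin d)) r))).map Prod.snd =
        volume.restrict ((fun y => b + y) ''
          {x : EuclideanSpace ℝ (Fin d) | ∑ j, (x j / ahat j) ^ 2 < 1})) ∧
    (∫⁻ q, ENNReal.ofReal (‖q.1 - q.2‖ ^ 2)
        ∂(Measure.map (fun x => (x, S x))
          (volume.restrict (Metric.ball (0 : EuclideanSpace ℝ (Fin d)) r)))) =
      ENNReal.ofReal
        ((volume (Metric.ball (0 : EuclideanSpace ℝ (Fin d)) 1)).toReal * r ^ d *
          (‖b‖ ^ 2 + (∑ j, (ahat j - r) ^ 2) / (d + 2))) := by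
  have hcost : ∫⁻ q, ENNReal.ofReal (‖q.1 - q.2‖ ^ 2)
      ∂(Measure.map (fun x => (x, S x))
        (volume.restrict (Metric.ball (0 : EuclideanSpace ℝ (Fin d)) r))) =
      ENNReal.ofReal
        ((volume (Metric.ball (0 : EuclideanSpace ℝ (Fin d)) 1)).toReal * r ^ d *
          (‖b‖ ^ 2 + (∑ j, (ahat j - r) ^ 2) / (d + 2))) := by
    rw [map_cost hr hpos hS, value_int hr hpos hS hd]
  refine ⟨?_, marg_fst hr hpos hS, marg_snd hr hpos hS hprod, hcost⟩
  apply le_antisymm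
  · exact sInf_le ⟨Measure.map (fun x => (x, S x))
      (volume.restrict (Metric.ball (0 : EuclideanSpace ℝ (Fin d)) r)),
      marg_fst hr hpos hS, marg_snd hr hpos hS hprod, hcost.symm⟩
  · refine le_sInf ?_
    rintro C ⟨π, h1, h2, rfl⟩
    have := lower_bound hr hpos hS hd hprod π h1 h2
    rwa [value_int hr hpos hS hd] at this
end
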